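/- arXiv:1806.02255 — 2 statements merged into one kernel-verified Lean document; each statement's English description precedes it below -/
import Mathlib

section
/- In the setting of the previous proposition, suppose additionally that each agent's feasible set is defined by a shared constraint: K_i(x_{-i}) = {x_i ∈ ℝ^{n_i} : (x_i, x_{-i}) ∈ X} for i = 1,…,N+1, where X ⊆ ℝ^n is a closed convex set. If x* solves VI(X, F), with F(x) = (∇_{x_1} f_1(x), …, ∇_{x_N} f_N(x), G(x)), then x* solves QVI(K, F) where K(x) = ∏_{i=1}^{N+1} K_i(x_{-i}); consequently, under the convexity and differentiability assumptions on the f_i and continuity of G, x* solves the MOPEC. -/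
open RealInnerProductSpace

/-- First-order condition for convex differentiable functions. -/
lemma convex_first_order {F : Type*} [NormedAddCommGroup F] [InnerProductSpace ℝ F] [CompleteSpace F]
    {g : F → ℝ} {g' x y : F} (hconv : ConvexOn ℝ Set.univ g)
    (hg : HasGradientAt g g' x) : g x + ⟪g', y - x⟫ ≤ g y := by
  have hline : HasDerivAt (fun t : ℝ => x + t • (y - x)) (y - x) 0 := by
    simpa using ((hasDerivAt_id (0 : ℝ)).smul_const (y - x)).const_add x
  have hd : HasDerivAt (fun t : ℝ => g (x + t • (y - x))) ⟪g', y - x⟫ 0 := by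
    have h2 : HasFDerivAt g ((InnerProductSpace.toDual ℝ F) g')
        ((fun t : ℝ => x + t • (y - x)) 0) := by
      simpa using hg.hasFDerivAt
    exact (by simpa using h2.comp_hasDerivAt 0 hline :
      HasDerivAt (g ∘ fun t : ℝ => x + t • (y - x)) ⟪g', y - x⟫ 0)
  rw [hasDerivAt_iff_tendsto_slope] at hd
  have hd' : Filter.Tendsto (slope (fun t : ℝ => g (x + t • (y - x))) 0)
      (nhdsWithin 0 (Set.Ioi 0)) (nhds ⟪g', y - x⟫) :=
    hd.mono_left (nhdsWithin_mono _ (fun t ht => ne_of_gt ht))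
  have hle : ⟪g', y - x⟫ ≤ g y - g x := by
    refine le_of_tendsto hd' ?_
    filter_upwards [Ioo_mem_nhdsGT_of_mem (Set.mem_Ico.2 ⟨le_rfl, one_pos⟩)] with t ht
    obtain ⟨ht0, ht1⟩ := ht
    have hconvineq : g (x + t • (y - x)) ≤ (1 - t) * g x + t * g y := by
      have h1 : x + t • (y - x) = (1 - t) • x + t • y := by
        rw [sub_smul, smul_sub, one_smul]; abel
      rw [h1]
      exact hconv.2 (Set.mem_univ x) (Set.mem_univ y) (by linarith) ht0.le (by ring)
    rw [slope_def_field]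
    simp only [sub_zero]
    rw [div_le_iff₀ ht0]
    simp only [zero_smul, add_zero]
    nlinarith
  linarith

/-- Proposition 2: with a shared constraint Kᵢ(x₋ᵢ) = {xᵢ : (xᵢ, x₋ᵢ) ∈ X} for a
closed convex set X, any solution of VI(X, F) solves QVI(K, F) and hence the MOPEC. -/
theorem stmt_2 {N : ℕ} {n : Fin (N + 1) → ℕ}
    (f : Fin N → ((j : Fin (N + 1)) → EuclideanSpace ℝ (Fin (n j))) → ℝ)
    (G : ((j : Fin (N + 1)) → EuclideanSpace ℝ (Fin (n j))) →
      EuclideanSpace ℝ (Fin (n (Fin.last N))))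
    (X : Set ((j : Fin (N + 1)) → EuclideanSpace ℝ (Fin (n j))))
    (hXclosed : IsClosed X) (hXconv : Convex ℝ X)
    (hf : ∀ i, ContDiff ℝ 1 (f i))
    (hfconv : ∀ i x, ConvexOn ℝ Set.univ
      (fun xi => f i (Function.update x i.castSucc xi)))
    (hG : Continuous G)
    (K : (i : Fin (N + 1)) → ((j : Fin (N + 1)) → EuclideanSpace ℝ (Fin (n j))) →
      Set (EuclideanSpace ℝ (Fin (n i))))
    (hK : ∀ i x, K i x = {xi | Function.update x i xi ∈ X})
    (xs : (j : Fin (N + 1)) → EuclideanSpace ℝ (Fin (n j)))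
    -- xs solves VI(X, F)
    (hxsX : xs ∈ X)
    (hVI : ∀ x ∈ X,
      0 ≤ ∑ j, ⟪(Fin.lastCases (motive := fun j => EuclideanSpace ℝ (Fin (n j)))
          (G xs)
          (fun i => gradient (fun xi => f i (Function.update xs i.castSucc xi))
            (xs i.castSucc)) j), x j - xs j⟫) :
    -- xs solves QVI(K, F)
    (((∀ j, xs j ∈ K j xs) ∧
      ∀ x : (j : Fin (N + 1)) → EuclideanSpace ℝ (Fin (n j)),
        (∀ j, x j ∈ K j xs) →
        0 ≤ ∑ j, ⟪(Fin.lastCases (motive := fun j => EuclideanSpace ℝ (Fin (n j)))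
            (G xs)
            (fun i => gradient (fun xi => f i (Function.update xs i.castSucc xi))
              (xs i.castSucc)) j), x j - xs j⟫))
    ∧
    -- xs solves the MOPEC
    ((∀ i : Fin N, xs i.castSucc ∈ K i.castSucc xs ∧
        ∀ xi ∈ K i.castSucc xs, f i xs ≤ f i (Function.update xs i.castSucc xi)) ∧
      (xs (Fin.last N) ∈ K (Fin.last N) xs ∧
        ∀ z ∈ K (Fin.last N) xs, 0 ≤ ⟪G xs, z - xs (Fin.last N)⟫)) := by
  set F : (j : Fin (N + 1)) → EuclideanSpace ℝ (Fin (n j)) :=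
    Fin.lastCases (motive := fun j => EuclideanSpace ℝ (Fin (n j))) (G xs)
      (fun i => gradient (fun xi => f i (Function.update xs i.castSucc xi))
        (xs i.castSucc)) with hF
  -- Key lemma: per-coordinate VI
  have key : ∀ (j : Fin (N + 1)) (v : EuclideanSpace ℝ (Fin (n j))),
      Function.update xs j v ∈ X → 0 ≤ ⟪F j, v - xs j⟫ := by
    intro j v hv
    have h := hVI (Function.update xs j v) hv
    have hsum : ∑ k, ⟪F k, Function.update xs j v k - xs k⟫ = ⟪F j, v - xs j⟫ := by
      rw [Finset.sum_eq_single_of_mem j (Finset.mem_univ j)]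
      · rw [Function.update_self]
      · intro k _ hk
        rw [Function.update_of_ne hk]
        simp
    rw [hsum] at h
    exact h
  have hmem : ∀ j, xs j ∈ K j xs := by
    intro j
    rw [hK]
    simpa [Function.update_eq_self] using hxsX
  have hmemX : ∀ (j : Fin (N + 1)) (v : EuclideanSpace ℝ (Fin (n j))),
      v ∈ K j xs → Function.update xs j v ∈ X := by
    intro j v hv; rw [hK] at hv; exact hv
  refine ⟨⟨hmem, ?_⟩, ⟨?_, hmem _, ?_⟩⟩
  · -- QVI
    intro x hx
    exact Finset.sum_nonneg fun j _ => key j (x j) (hmemX j (x j) (hx j))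
  · -- minimization for each agent i
    intro i
    refine ⟨hmem _, fun xi hxi => ?_⟩
    set g : EuclideanSpace ℝ (Fin (n i.castSucc)) → ℝ :=
      fun v => f i (Function.update xs i.castSucc v) with hg
    have hgdiff : DifferentiableAt ℝ g (xs i.castSucc) :=
      (((hf i).differentiable one_ne_zero).differentiableAt).comp _
        (hasFDerivAt_update xs (xs i.castSucc)).differentiableAt
    have hgrad : HasGradientAt g (gradient g (xs i.castSucc)) (xs i.castSucc) :=
      hgdiff.hasGradientAt
    have hkey : 0 ≤ ⟪gradient g (xs i.castSucc), xi - xs i.castSucc⟫ := by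
      have := key i.castSucc xi (hmemX _ xi hxi)
      simpa [hF, Fin.lastCases_castSucc, hg] using this
    have hfo : g (xs i.castSucc) + ⟪gradient g (xs i.castSucc), xi - xs i.castSucc⟫ ≤ g xi :=
      convex_first_order (hfconv i xs) hgrad
    have hgx : g (xs i.castSucc) = f i xs := by
      rw [hg]; simp [Function.update_eq_self]
    calc f i xs = g (xs i.castSucc) := hgx.symm
      _ ≤ g (xs i.castSucc) + ⟪gradient g (xs i.castSucc), xi - xs i.castSucc⟫ := by
          linarith
      _ ≤ g xi := hfo
  · -- VI for the last agent
    intro z hz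
    have := key (Fin.last N) z (hmemX _ z hz)
    simpa [hF, Fin.lastCases_last] using this
end

section
/- Consider N optimization agents and one equilibrium agent, with agent i controlling x_i ∈ ℝ^{n_i}, and suppose K_i(x_{-i}) = {x_i ∈ [l_i, u_i] : h_i(x_i, x_{-i}) = 0, g_i(x_i, x_{-i}) ≤ 0} where h_i : ℝ^n → ℝ^{v_i} is affine, g_i : ℝ^n → ℝ^{m_i} is continuously differentiable with each component convex as a function of x_i, l_i ≤ u_i with entries of l_i in ℝ∪{−∞} and of u_i in ℝ∪{+∞}, each f_i : ℝ^n → ℝ (i = 1,…,N) is continuously differentiable with f_i(·, x_{-i}) convex, and G : ℝ^n → ℝ^{n_{N+1}} is continuous. Suppose (x*, λ*, μ*) satisfies the complementarity system: for i = 1,…,N, componentwise box complementarity l_i ≤ x_i* ≤ u_i ⊥ ∇_{x_i} f_i(x*) − ∇_{x_i} h_i(x*) λ_i* − ∇_{x_i} g_i(x*) μ_i*; for i = N+1 the same condition with G(x*) in place of the objective gradient; h_i(x*) = 0 for all i with λ_i* free; and for all i, g_i(x*) ≤ 0, μ_i* ≤ 0, with componentwise complementarity μ*_{i,j} g_{i,j}(x*)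 = 0. Then x* solves the MOPEC. (This is the 'if' direction of Proposition 3; it holds without any constraint qualification.) -/
open RealInnerProductSpace

section AuxLemmas
open InnerProductSpace

lemma convex_grad_le {E : Type*} [NormedAddCommGroup E] [InnerProductSpace ℝ E]
    [CompleteSpace E] {φ : E → ℝ} (hc : ConvexOn ℝ Set.univ φ) {x : E}
    (hd : DifferentiableAt ℝ φ x) (y : E) :
    ⟪gradient φ x, y - x⟫ ≤ φ y - φ x := by
  have hgrad : HasFDerivAt φ (toDual ℝ E (gradient φ x)) x := hd.hasGradientAt.hasFDerivAt
  have hline : HasDerivAt (fun t : ℝ => x + t • (y - x)) (y - x) 0 := by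
    simpa using ((hasDerivAt_id (0:ℝ)).smul_const (y - x)).const_add x
  have hψ : HasDerivAt (fun t : ℝ => φ (x + t • (y - x)))
      ((toDual ℝ E (gradient φ x)) (y - x)) 0 := by
    have hgrad' : HasFDerivAt φ (toDual ℝ E (gradient φ x)) (x + (0:ℝ) • (y - x)) := by
      simpa using hgrad
    exact hgrad'.comp_hasDerivAt 0 hline
  have hconv : ConvexOn ℝ Set.univ (fun t : ℝ => φ (x + t • (y - x))) := by
    have h2 := hc.comp_affineMap (AffineMap.lineMap x y)
    have : (fun t : ℝ => φ (x + t • (y - x))) = φ ∘ (AffineMap.lineMap x y) := by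
      funext t
      simp [AffineMap.lineMap_apply, add_comm]
    rw [this]
    simpa using h2
  have hsl := hconv.le_slope_of_hasDerivAt (Set.mem_univ (0:ℝ)) (Set.mem_univ (1:ℝ))
    one_pos hψ
  rw [toDual_apply_apply] at hsl
  simpa [slope_def_field] using hsl

lemma affine_grad_inner {E : Type*} [NormedAddCommGroup E] [InnerProductSpace ℝ E]
    [CompleteSpace E] (ψ : E →L[ℝ] ℝ) (c : ℝ) (x d : E) :
    ⟪gradient (fun z => ψ z + c) x, d⟫ = ψ d := by
  have h1 : HasGradientAt (fun z => ψ z + c) ((toDual ℝ E).symm ψ) x :=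
    (ψ.hasFDerivAt.add_const c).hasGradientAt
  rw [h1.gradient, toDual_symm_apply]


end AuxLemmas

/-- The 'if' direction of Proposition 3: a solution of the complementarity system
(KKT conditions of all agents collected into an MCP) solves the MOPEC, with
Kᵢ(x₋ᵢ) = {xᵢ ∈ [lᵢ, uᵢ] : hᵢ(xᵢ, x₋ᵢ) = 0, gᵢ(xᵢ, x₋ᵢ) ≤ 0}. -/
theorem stmt_3 {N : ℕ} {n v mm : Fin (N + 1) → ℕ}
    (f : Fin N → ((j : Fin (N + 1)) → EuclideanSpace ℝ (Fin (n j))) → ℝ)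
    (h : (i : Fin (N + 1)) → Fin (v i) →
      ((j : Fin (N + 1)) → EuclideanSpace ℝ (Fin (n j))) → ℝ)
    (g : (i : Fin (N + 1)) → Fin (mm i) →
      ((j : Fin (N + 1)) → EuclideanSpace ℝ (Fin (n j))) → ℝ)
    (G : ((j : Fin (N + 1)) → EuclideanSpace ℝ (Fin (n j))) →
      EuclideanSpace ℝ (Fin (n (Fin.last N))))
    (l u : (i : Fin (N + 1)) → Fin (n i) → EReal)
    (hlu : ∀ i k, l i k ≤ u i k)
    -- each h i is affine
    (haff : ∀ i a, ∃ (φ : ((j : Fin (N + 1)) → EuclideanSpace ℝ (Fin (n j))) →ₗ[ℝ] ℝ)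
      (c : ℝ), ∀ x, h i a x = φ x + c)
    -- each g i is C¹ with every component convex in xᵢ
    (hg : ∀ i b, ContDiff ℝ 1 (g i b))
    (hgconv : ∀ i b x, ConvexOn ℝ Set.univ (fun xi => g i b (Function.update x i xi)))
    -- each f i is C¹ and convex in xᵢ
    (hf : ∀ i, ContDiff ℝ 1 (f i))
    (hfconv : ∀ i x, ConvexOn ℝ Set.univ
      (fun xi => f i (Function.update x i.castSucc xi)))
    (hG : Continuous G)
    (xs : (j : Fin (N + 1)) → EuclideanSpace ℝ (Fin (n j)))
    (lam : (i : Fin (N + 1)) → Fin (v i) → ℝ)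
    (mu : (i : Fin (N + 1)) → Fin (mm i) → ℝ)
    -- box feasibility l ≤ x* ≤ u
    (hbox : ∀ i k, l i k ≤ (xs i k : EReal) ∧ (xs i k : EReal) ≤ u i k)
    -- componentwise box complementarity with the Lagrangian gradients
    (hcomp : ∀ i k,
      ((xs i k : EReal) = l i k ∧
        0 ≤ ((Fin.lastCases (motive := fun j => EuclideanSpace ℝ (Fin (n j))) (G xs)
              (fun i' => gradient (fun xi => f i' (Function.update xs i'.castSucc xi))
                (xs i'.castSucc)) i)
            - (∑ a, lam i a • gradient (fun xi => h i a (Function.update xs i xi)) (xs i))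
            - (∑ b, mu i b • gradient (fun xi => g i b (Function.update xs i xi)) (xs i))) k)
      ∨ ((Fin.lastCases (motive := fun j => EuclideanSpace ℝ (Fin (n j))) (G xs)
              (fun i' => gradient (fun xi => f i' (Function.update xs i'.castSucc xi))
                (xs i'.castSucc)) i)
            - (∑ a, lam i a • gradient (fun xi => h i a (Function.update xs i xi)) (xs i))
            - (∑ b, mu i b • gradient (fun xi => g i b (Function.update xs i xi)) (xs i))) k = 0
      ∨ ((xs i k : EReal) = u i k ∧
        ((Fin.lastCases (motive := fun j => EuclideanSpace ℝ (Fin (n j))) (G xs)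
              (fun i' => gradient (fun xi => f i' (Function.update xs i'.castSucc xi))
                (xs i'.castSucc)) i)
            - (∑ a, lam i a • gradient (fun xi => h i a (Function.update xs i xi)) (xs i))
            - (∑ b, mu i b • gradient (fun xi => g i b (Function.update xs i xi)) (xs i))) k ≤ 0))
    -- primal feasibility and complementary slackness
    (hheq : ∀ i a, h i a xs = 0)
    (hgle : ∀ i b, g i b xs ≤ 0)
    (hmu : ∀ i b, mu i b ≤ 0)
    (hslack : ∀ i b, mu i b * g i b xs = 0) :
    -- x* solves the MOPEC
    (let K : (i : Fin (N + 1)) → Set (EuclideanSpace ℝ (Fin (n i))) := fun i =>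
      {xi | (∀ k, l i k ≤ (xi k : EReal) ∧ (xi k : EReal) ≤ u i k) ∧
        (∀ a, h i a (Function.update xs i xi) = 0) ∧
        (∀ b, g i b (Function.update xs i xi) ≤ 0)};
    (∀ i : Fin N, xs i.castSucc ∈ K i.castSucc ∧
        ∀ xi ∈ K i.castSucc, f i xs ≤ f i (Function.update xs i.castSucc xi)) ∧
      (xs (Fin.last N) ∈ K (Fin.last N) ∧
        ∀ z ∈ K (Fin.last N), 0 ≤ ⟪G xs, z - xs (Fin.last N)⟫)) := by
  classical
  intro K
  have hus : ∀ i : Fin (N+1), Function.update xs i (xs i) = xs := fun i =>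
    Function.update_eq_self i xs
  have hmem : ∀ i, xs i ∈ K i := by
    intro i
    refine ⟨hbox i, ?_, ?_⟩
    · intro a; rw [hus]; exact hheq i a
    · intro b; rw [hus]; exact hgle i b
  -- decomposition of the update map
  have hupdec : ∀ (i : Fin (N+1)) (z : EuclideanSpace ℝ (Fin (n i))),
      Function.update xs i z = xs + Pi.single i (z - xs i) := by
    intro i z; funext j
    rcases eq_or_ne j i with rfl | hj
    · simp
    · simp [Function.update_of_ne hj, Pi.single_eq_of_ne hj]
  have hdiffU : ∀ i : Fin (N+1), DifferentiableAt ℝ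
      (fun z : EuclideanSpace ℝ (Fin (n i)) => Function.update xs i z) (xs i) := by
    intro i
    set S := LinearMap.toContinuousLinearMap
      (LinearMap.single ℝ (fun j => EuclideanSpace ℝ (Fin (n j))) i) with hS
    have heq : (fun z : EuclideanSpace ℝ (Fin (n i)) => Function.update xs i z)
        = fun z => xs + (S z - S (xs i)) := by
      funext z
      rw [hupdec, ← map_sub]
      congr 1
    rw [heq]
    exact ((S.differentiable.differentiableAt).sub_const (S (xs i))).const_add xs
  have key : ∀ i : Fin (N+1), ∀ xi ∈ K i,
      (0:ℝ) ≤ ⟪(Fin.lastCases (motive := fun j => EuclideanSpace ℝ (Fin (n j))) (G xs)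
              (fun i' => gradient (fun z => f i' (Function.update xs i'.castSucc z))
                (xs i'.castSucc)) i), xi - xs i⟫ := by
    intro i xi hxi
    set V : EuclideanSpace ℝ (Fin (n i)) :=
      Fin.lastCases (motive := fun j => EuclideanSpace ℝ (Fin (n j))) (G xs)
        (fun i' => gradient (fun z => f i' (Function.update xs i'.castSucc z))
          (xs i'.castSucc)) i with hV
    set A : EuclideanSpace ℝ (Fin (n i)) :=
      ∑ a, lam i a • gradient (fun z => h i a (Function.update xs i z)) (xs i) with hA
    set B : EuclideanSpace ℝ (Fin (n i)) :=
      ∑ b, mu i b • gradient (fun z => g i b (Function.update xs i z)) (xs i) with hB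
    set d : EuclideanSpace ℝ (Fin (n i)) := xi - xs i with hd
    have h1 : (0:ℝ) ≤ ⟪V - A - B, d⟫ := by
      rw [PiLp.inner_apply]
      apply Finset.sum_nonneg
      intro k _
      have hdk : d k = xi k - xs i k := rfl
      have hterm : (inner ℝ ((V - A - B) k) (d k) : ℝ) = (V - A - B) k * d k :=
        RCLike.inner_apply' _ _
      rw [hterm]
      rcases hcomp i k with ⟨hl, hw⟩ | hw | ⟨hu2, hw⟩
      · have hw' : (0:ℝ) ≤ (V - A - B) k := hw
        have hxk : xs i k ≤ xi k := by
          have := (hxi.1 k).1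
          rw [← hl] at this
          exact_mod_cast this
        have : (0:ℝ) ≤ d k := by rw [hdk]; linarith
        exact mul_nonneg hw' this
      · have hw' : (V - A - B) k = 0 := hw
        rw [hw', zero_mul]
      · have hw' : (V - A - B) k ≤ 0 := hw
        have hxk : xi k ≤ xs i k := by
          have := (hxi.1 k).2
          rw [← hu2] at this
          exact_mod_cast this
        have hdk' : d k ≤ 0 := by rw [hdk]; linarith
        nlinarith
    have h2 : ⟪A, d⟫ = 0 := by
      rw [hA, sum_inner]
      apply Finset.sum_eq_zero
      intro a _
      rw [real_inner_smul_left]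
      -- the function z ↦ h i a (update xs i z) is affine
      obtain ⟨φ, c, hφ⟩ := haff i a
      set ψ : EuclideanSpace ℝ (Fin (n i)) →L[ℝ] ℝ := LinearMap.toContinuousLinearMap
        (φ.comp (LinearMap.single ℝ (fun j => EuclideanSpace ℝ (Fin (n j))) i)) with hψ
      have hfun : (fun z : EuclideanSpace ℝ (Fin (n i)) => h i a (Function.update xs i z))
          = fun z => ψ z + (φ xs - ψ (xs i) + c) := by
        funext z
        rw [hφ, hupdec, map_add]
        have : φ (Pi.single i (z - xs i)) = ψ z - ψ (xs i) := by
          have : ψ z - ψ (xs i) = ψ (z - xs i) := (map_sub ψ z (xs i)).symm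
          rw [this]
          rfl
        rw [this]; ring
      have hinner : ⟪gradient (fun z => h i a (Function.update xs i z)) (xs i), d⟫ = ψ d := by
        rw [hfun]
        exact affine_grad_inner ψ _ (xs i) d
      have hψd : ψ d = 0 := by
        have hxi0 : h i a (Function.update xs i xi) = 0 := hxi.2.1 a
        have hxs0 : h i a (Function.update xs i (xs i)) = 0 := by rw [hus]; exact hheq i a
        have e1 : ψ xi + (φ xs - ψ (xs i) + c) = 0 := by rw [← congrFun hfun xi]; exact hxi0
        have e2 : ψ (xs i) + (φ xs - ψ (xs i) + c) = 0 := by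
          rw [← congrFun hfun (xs i)]; exact hxs0
        have : ψ d = ψ xi - ψ (xs i) := map_sub ψ xi (xs i)
        rw [this]; linarith
      rw [hinner, hψd, mul_zero]
    have h3 : (0:ℝ) ≤ ⟪B, d⟫ := by
      rw [hB, sum_inner]
      apply Finset.sum_nonneg
      intro b _
      rw [real_inner_smul_left]
      have hdg : DifferentiableAt ℝ (fun z => g i b (Function.update xs i z)) (xs i) := by
        have := (((hg i b).differentiable one_ne_zero) (Function.update xs i (xs i))).comp
          (xs i) (hdiffU i)
        exact this
      have hle := convex_grad_le (hgconv i b xs) hdg xi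
      have hgs : g i b (Function.update xs i (xs i)) = g i b xs := by rw [hus]
      have hgxi : g i b (Function.update xs i xi) ≤ 0 := hxi.2.2 b
      have hmub := hmu i b
      have hsl := hslack i b
      have hgd : ⟪gradient (fun z => g i b (Function.update xs i z)) (xs i), d⟫
          ≤ g i b (Function.update xs i xi) - g i b xs := by
        rw [← hgs]; exact hle
      nlinarith
    have hVsum : ⟪V, d⟫ = ⟪V - A - B, d⟫ + ⟪A, d⟫ + ⟪B, d⟫ := by
      rw [← inner_add_left, ← inner_add_left]
      congr 1
      abel
    rw [hVsum]
    linarith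
  refine ⟨?_, ?_⟩
  · intro i'
    refine ⟨hmem i'.castSucc, ?_⟩
    intro xi hxi
    have hk := key i'.castSucc xi hxi
    rw [Fin.lastCases_castSucc] at hk
    have hdf : DifferentiableAt ℝ (fun z => f i' (Function.update xs i'.castSucc z))
        (xs i'.castSucc) :=
      (((hf i').differentiable one_ne_zero) (Function.update xs i'.castSucc (xs i'.castSucc))).comp
        (xs i'.castSucc) (hdiffU i'.castSucc)
    have hle := convex_grad_le (hfconv i' xs) hdf xi
    have hfs : f i' (Function.update xs i'.castSucc (xs i'.castSucc)) = f i' xs := by rw [hus]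
    rw [hfs] at hle
    linarith
  · refine ⟨hmem (Fin.last N), ?_⟩
    intro z hz
    have hk := key (Fin.last N) z hz
    rwa [Fin.lastCases_last] at hk
end
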